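/- Let A be a commutative k-algebra that is an integral domain, (Γ,≻) a linearly ordered abelian group, v : A∖{0} → Γ a valuation over k, and B = {b_1,…,b_n} ⊆ A∖{0} a finite Khovanskii basis for (A,v). Assume the value semigroup S(A,v) is maximum well-ordered, i.e. there is no infinite strictly ≻-increasing sequence in S(A,v). Then for every nonzero f ∈ A there exists a polynomial p = Σ_α c_α x^α ∈ k[x_1,…,x_n] with f = p(b_1,…,b_n) and v(f) = min_≻{Σ_{j=1}^n α_j·v(b_j) : c_α ≠ 0}. In particular B generates A as a k-algebra, and for every nonzero f, v(f) is the ≻-maximum, over all polynomials p with p(b_1,…,b_n) = f, of min_≻{Σ_j α_j·v(b_j) : c_α ≠ 0}. -/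

import Mathlib

/-- **Termination of the subduction algorithm** (Proposition `prop-subduction`).
Let `v` be a valuation on `A` over `k` with finite Khovanskii basis `b₁, …, bₙ`, and suppose
the value semigroup is maximum well-ordered (no infinite strictly increasing sequence).
Then every nonzero `f ∈ A` can be written as `f = p(b₁,…,bₙ)` with
`v f = min {Σ αⱼ • v bⱼ : c_α ≠ 0}`; in particular `B` generates `A` as a `k`-algebra and
`v f` is the maximum over all polynomial expressions for `f` of this minimum. -/
theorem stmt_3 {k A : Type} [Field k] [CommRing A] [IsDomain A] [Algebra k A]
    {Γ : Type} [AddCommGroup Γ] [LinearOrder Γ] [IsOrderedAddMonoid Γ]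
    (v : A → Γ)
    (hadd : ∀ f g : A, f ≠ 0 → g ≠ 0 → f + g ≠ 0 → min (v f) (v g) ≤ v (f + g))
    (hmul : ∀ f g : A, f ≠ 0 → g ≠ 0 → v (f * g) = v f + v g)
    (hscal : ∀ (c : k) (f : A), c ≠ 0 → f ≠ 0 → v (algebraMap k A c * f) = v f)
    {n : ℕ} (b : Fin n → A) (hb0 : ∀ j, b j ≠ 0)
    -- `B = {b 0, …, b (n-1)}` is a Khovanskii basis for `(A, v)`:
    (hKB : ∀ f : A, f ≠ 0 → ∃ p : MvPolynomial (Fin n) k,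
        (∀ α ∈ p.support, (∑ j, α j • v (b j)) = v f) ∧
        (f = MvPolynomial.aeval b p ∨ v f < v (f - MvPolynomial.aeval b p)))
    -- the value semigroup is maximum well-ordered:
    (hwo : ¬ ∃ s : ℕ → Γ, StrictMono s ∧ ∀ i : ℕ, ∃ f : A, f ≠ 0 ∧ v f = s i) :
    (∀ f : A, f ≠ 0 → ∃ p : MvPolynomial (Fin n) k,
        f = MvPolynomial.aeval b p ∧
        (∀ α ∈ p.support, v f ≤ ∑ j, α j • v (b j)) ∧
        (∃ α ∈ p.support, v f = ∑ j, α j • v (b j))) ∧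
    Algebra.adjoin k (Set.range b) = ⊤ ∧
    (∀ f : A, f ≠ 0 → ∀ q : MvPolynomial (Fin n) k, MvPolynomial.aeval b q = f →
        ∃ α ∈ q.support, (∑ j, α j • v (b j)) ≤ v f) := by
  classical
  -- v 1 = 0
  have hv1 : v (1 : A) = 0 := by
    have h := hmul 1 1 one_ne_zero one_ne_zero
    rw [mul_one] at h
    exact left_eq_add.mp h
  -- value of powers
  have hvpow : ∀ (x : A), x ≠ 0 → ∀ m : ℕ, v (x ^ m) = m • v x := by
    intro x hx m
    induction m with
    | zero => simpa using hv1
    | succ m ih =>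
      rw [pow_succ, hmul _ _ (pow_ne_zero _ hx) hx, ih, succ_nsmul]
  -- value of products of powers of the basis elements
  have hvprod : ∀ (s : Finset (Fin n)) (e : Fin n → ℕ),
      v (∏ j ∈ s, b j ^ e j) = ∑ j ∈ s, e j • v (b j) := by
    intro s
    induction s using Finset.induction with
    | empty => intro e; simpa using hv1
    | @insert a s ha ih =>
      intro e
      have hprod : (∏ j ∈ s, b j ^ e j) ≠ 0 :=
        Finset.prod_ne_zero_iff.mpr fun j _ => pow_ne_zero _ (hb0 j)
      rw [Finset.prod_insert ha, Finset.sum_insert ha,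
        hmul _ _ (pow_ne_zero _ (hb0 a)) hprod, hvpow _ (hb0 a), ih]
  have hprodne : ∀ α : Fin n →₀ ℕ, (∏ j, b j ^ α j) ≠ 0 := fun α =>
    Finset.prod_ne_zero_iff.mpr fun j _ => pow_ne_zero _ (hb0 j)
  have hvterm : ∀ (c : k), c ≠ 0 → ∀ α : Fin n →₀ ℕ,
      v (algebraMap k A c * ∏ j, b j ^ α j) = ∑ j, α j • v (b j) := by
    intro c hc α
    rw [hscal c _ hc (hprodne α), hvprod]
  -- lower bound for valuations of sums
  have hvsum : ∀ (s : Finset (Fin n →₀ ℕ)) (t : (Fin n →₀ ℕ) → A),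
      (∀ i ∈ s, t i ≠ 0) → (∑ i ∈ s, t i) ≠ 0 →
      ∃ i ∈ s, v (t i) ≤ v (∑ i ∈ s, t i) := by
    intro s
    induction s using Finset.induction with
    | empty => intro t _ h; simp at h
    | @insert a s ha ih =>
      intro t ht hsum
      rw [Finset.sum_insert ha] at hsum ⊢
      by_cases hrest : (∑ i ∈ s, t i) = 0
      · exact ⟨a, Finset.mem_insert_self _ _, by rw [hrest, add_zero]⟩
      · have hta := ht a (Finset.mem_insert_self _ _)
        have h2 := hadd (t a) _ hta hrest hsum
        obtain ⟨i, hi, hvi⟩ := ih t (fun i hi => ht i (Finset.mem_insert_of_mem hi)) hrest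
        rcases le_total (v (t a)) (v (∑ i ∈ s, t i)) with h | h
        · exact ⟨a, Finset.mem_insert_self _ _, (min_eq_left h) ▸ h2⟩
        · exact ⟨i, Finset.mem_insert_of_mem hi, hvi.trans ((min_eq_right h) ▸ h2)⟩
  -- third part : lower bound lemma
  have hlow : ∀ (q : MvPolynomial (Fin n) k) (f : A), f ≠ 0 → MvPolynomial.aeval b q = f →
      ∃ α ∈ q.support, (∑ j, α j • v (b j)) ≤ v f := by
    intro q f hf hq
    have hexp : MvPolynomial.aeval b q
        = ∑ α ∈ q.support, algebraMap k A (q.coeff α) * ∏ j, b j ^ α j := by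
      conv_lhs => rw [q.as_sum]
      rw [map_sum]
      refine Finset.sum_congr rfl fun α hα => ?_
      rw [MvPolynomial.aeval_monomial]
      congr 1
      rw [Finsupp.prod_fintype]
      intro j; exact pow_zero _
    have hterm_ne : ∀ α ∈ q.support, algebraMap k A (q.coeff α) * ∏ j, b j ^ α j ≠ 0 := by
      intro α hα
      have hc : q.coeff α ≠ 0 := MvPolynomial.mem_support_iff.mp hα
      have : algebraMap k A (q.coeff α) ≠ 0 := by
        intro h
        exact hc ((algebraMap k A).injective (h.trans (map_zero _).symm))
      exact mul_ne_zero this (hprodne α)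
    have hsne : (∑ α ∈ q.support, algebraMap k A (q.coeff α) * ∏ j, b j ^ α j) ≠ 0 := by
      rw [← hexp, hq]; exact hf
    obtain ⟨α, hα, hle⟩ := hvsum q.support _ hterm_ne hsne
    refine ⟨α, hα, ?_⟩
    rw [← hvterm (q.coeff α) (MvPolynomial.mem_support_iff.mp hα) α]
    rw [← hexp, hq] at hle
    exact hle
  -- well-foundedness of the "increasing value" recursion
  have hwf : WellFounded (fun x y : {g : Γ // ∃ f : A, f ≠ 0 ∧ v f = g} => (y : Γ) < (x : Γ)) := by
    by_contra h
    rw [RelEmbedding.wellFounded_iff_isEmpty, not_isEmpty_iff] at h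
    obtain ⟨e⟩ := h
    exact hwo ⟨fun i => (e i).1, fun a c hac => e.map_rel_iff.mpr hac, fun i => (e i).2⟩
  -- main part via well-founded recursion
  have key : ∀ gs : {g : Γ // ∃ f : A, f ≠ 0 ∧ v f = g}, ∀ f : A, f ≠ 0 → v f = gs.1 →
      ∃ p : MvPolynomial (Fin n) k,
        f = MvPolynomial.aeval b p ∧
        (∀ α ∈ p.support, v f ≤ ∑ j, α j • v (b j)) ∧
        (∃ α ∈ p.support, v f = ∑ j, α j • v (b j)) := by
    intro gs
    induction gs using WellFounded.induction hwf with
    | _ x ih =>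
      intro f hf hvf
      obtain ⟨p, hsup, hcase⟩ := hKB f hf
      by_cases heq : f - MvPolynomial.aeval b p = 0
      · have hfp : f = MvPolynomial.aeval b p := sub_eq_zero.mp heq
        have hp0 : p ≠ 0 := by
          rintro rfl; rw [map_zero] at hfp; exact hf hfp
        obtain ⟨α, hα⟩ := MvPolynomial.support_nonempty.mpr hp0
        exact ⟨p, hfp, fun β hβ => (hsup β hβ).symm.le, ⟨α, hα, (hsup α hα).symm⟩⟩
      · have hlt : v f < v (f - MvPolynomial.aeval b p) := by
          rcases hcase with h | h
          · exact absurd (sub_eq_zero.mpr h) heq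
          · exact h
        obtain ⟨q, hq, hq1, hq2⟩ :=
          ih ⟨v (f - MvPolynomial.aeval b p), f - MvPolynomial.aeval b p, heq, rfl⟩
            (by simpa [hvf] using hlt) (f - MvPolynomial.aeval b p) heq rfl
        have hp0 : p ≠ 0 := by
          rintro rfl
          rw [map_zero, sub_zero] at hlt
          exact absurd hlt (lt_irrefl _)
        obtain ⟨α0, hα0⟩ := MvPolynomial.support_nonempty.mpr hp0
        have hdisj : ∀ α ∈ p.support, α ∉ q.support := by
          intro α hα hαq
          have h1 := hsup α hα
          have h2 := hq1 α hαq
          rw [h1] at h2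
          exact absurd h2 (not_le.mpr hlt)
        refine ⟨p + q, ?_, ?_, ?_⟩
        · rw [map_add, ← hq]; ring
        · intro α hα
          rcases Finset.mem_union.mp (MvPolynomial.support_add hα) with h | h
          · exact (hsup α h).symm.le
          · exact hlt.le.trans (hq1 α h)
        · refine ⟨α0, ?_, (hsup α0 hα0).symm⟩
          have hc : (p + q).coeff α0 = p.coeff α0 := by
            rw [MvPolynomial.coeff_add,
              MvPolynomial.notMem_support_iff.mp (hdisj α0 hα0), add_zero]
          exact MvPolynomial.mem_support_iff.mpr
            (hc ▸ MvPolynomial.mem_support_iff.mp hα0)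
  have main : ∀ f : A, f ≠ 0 → ∃ p : MvPolynomial (Fin n) k,
      f = MvPolynomial.aeval b p ∧
      (∀ α ∈ p.support, v f ≤ ∑ j, α j • v (b j)) ∧
      (∃ α ∈ p.support, v f = ∑ j, α j • v (b j)) :=
    fun f hf => key ⟨v f, f, hf, rfl⟩ f hf rfl
  refine ⟨main, ?_, fun f hf q hq => hlow q f hf hq⟩
  rw [Algebra.adjoin_range_eq_range_aeval]
  rw [eq_top_iff]
  intro x _
  by_cases hx : x = 0
  · exact ⟨0, by simp [hx]⟩
  · obtain ⟨p, hp, -, -⟩ := main x hx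
    exact ⟨p, hp.symm⟩
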